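/- Let q be a prime power and m ≥ 1. Then the Wenger graph W_m(q) is isomorphic (as a graph) to the bipartite graph W'_m(q), via the map sending a point (p_1, …, p_{m+1}) of W_m(q) to the point (p_1, p_2, p'_3, …, p'_{m+1}) of W'_m(q), where p'_k = p_k + ∑_{i=2}^{k−1} p_i · p_1^{k−i} for k = 3, …, m+1, and sending each line [l_1, …, l_{m+1}] to itself. -/

import Mathlib

open Finset

/-- Adjacency relation of the Wenger graph `W_m(q)`: a point `p = (p_1, …, p_{m+1})`
(0-indexed here) is adjacent to a line `l = (l_1, …, l_{m+1})` iff
`l_{i+1} + p_{i+1} = l_i * p_1` for `i = 1, …, m`. -/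
def wengerAdj {F : Type*} [Field F] {m : ℕ} (p l : Fin (m + 1) → F) : Prop :=
  ∀ i : Fin m, l i.succ + p i.succ = l i.castSucc * p 0

/-- The Wenger graph `W_m(q)` as a simple graph on `P ⊕ L`, where both `P` (points, `inl`)
and `L` (lines, `inr`) are copies of `F^{m+1}` for a finite field `F` with `q` elements. -/
def WengerGraph (F : Type*) [Field F] (m : ℕ) :
    SimpleGraph ((Fin (m + 1) → F) ⊕ (Fin (m + 1) → F)) where
  Adj x y :=
    match x, y with
    | Sum.inl p, Sum.inr l => wengerAdj p l
    | Sum.inr l, Sum.inl p => wengerAdj p l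
    | _, _ => False
  symm := by refine ⟨?_⟩; rintro (p | l) (p' | l') h <;> exact h
  loopless := by refine ⟨?_⟩; rintro (p | l) h <;> exact h

/-- Adjacency relation of the graph `W'_m(q)`: `p ~ l` iff
`l_k + p_k = l_1 * p_1^(k-1)` for `k = 2, …, m+1` (0-indexed below). -/
def wengerAdj' {F : Type*} [Field F] {m : ℕ} (p l : Fin (m + 1) → F) : Prop :=
  ∀ i : Fin m, l i.succ + p i.succ = l 0 * p 0 ^ ((i : ℕ) + 1)

/-- The graph `W'_m(q)` on the same partite sets as `W_m(q)`. -/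
def WengerGraph' (F : Type*) [Field F] (m : ℕ) :
    SimpleGraph ((Fin (m + 1) → F) ⊕ (Fin (m + 1) → F)) where
  Adj x y :=
    match x, y with
    | Sum.inl p, Sum.inr l => wengerAdj' p l
    | Sum.inr l, Sum.inl p => wengerAdj' p l
    | _, _ => False
  symm := by refine ⟨?_⟩; rintro (p | l) (p' | l') h <;> exact h
  loopless := by refine ⟨?_⟩; rintro (p | l) h <;> exact h

/-- The map `ω` on points: `p'_k = p_k + ∑_{i=2}^{k-1} p_i * p_1^(k-i)` (1-indexed),
written 0-indexed as `p'_j = p_j + ∑_{1 ≤ i < j} p_i * p_0^(j-i)`. -/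
def omegaMap {F : Type*} [Field F] {m : ℕ} (p : Fin (m + 1) → F) : Fin (m + 1) → F :=
  fun j => p j + ∑ i : Fin (m + 1),
    if 1 ≤ (i : ℕ) ∧ (i : ℕ) < (j : ℕ) then p i * p 0 ^ ((j : ℕ) - (i : ℕ)) else 0

variable {F : Type*} [Field F] {m : ℕ}

lemma omega_zero (p : Fin (m + 1) → F) : omegaMap p 0 = p 0 := by
  simp [omegaMap]

lemma omega_one (p : Fin (m + 1) → F) (h : 1 < m + 1) :
    omegaMap p ⟨1, h⟩ = p ⟨1, h⟩ := by
  unfold omegaMap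
  simp only [Fin.val_mk]
  rw [Finset.sum_eq_zero, add_zero]
  intro i _
  rw [if_neg]
  omega

lemma omega_rec (p : Fin (m + 1) → F) (j : ℕ) (hj : 1 ≤ j) (h : j + 1 < m + 1) :
    omegaMap p ⟨j + 1, h⟩ = p ⟨j + 1, h⟩ + omegaMap p ⟨j, by omega⟩ * p 0 := by
  unfold omegaMap
  simp only [Fin.val_mk]
  congr 1
  rw [add_mul, Finset.sum_mul]
  have hjmem : (⟨j, by omega⟩ : Fin (m + 1)) ∈ (Finset.univ : Finset (Fin (m + 1))) :=
    Finset.mem_univ _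
  rw [show p (⟨j, by omega⟩ : Fin (m+1)) * p 0
      = ∑ i : Fin (m + 1), if i = ⟨j, by omega⟩ then p i * p 0 else 0 by
    rw [Finset.sum_ite_eq' Finset.univ]
    simp,
    ← Finset.sum_add_distrib]
  apply Finset.sum_congr rfl
  intro i _
  by_cases h1 : i = (⟨j, by omega⟩ : Fin (m + 1))
  · have hv : (i : ℕ) = j := by rw [h1]
    rw [if_pos (show 1 ≤ (i : ℕ) ∧ (i : ℕ) < j + 1 by omega), if_pos h1,
      if_neg (show ¬(1 ≤ (i : ℕ) ∧ (i : ℕ) < j) by omega)]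
    have hv1 : j + 1 - (i : ℕ) = 1 := by omega
    rw [hv1]
    ring
  · have hne : (i : ℕ) ≠ j := fun hc => h1 (Fin.ext hc)
    rw [if_neg h1]
    by_cases h2 : 1 ≤ (i : ℕ) ∧ (i : ℕ) < j
    · rw [if_pos (show 1 ≤ (i : ℕ) ∧ (i : ℕ) < j + 1 by omega), if_pos h2]
      have hv1 : j + 1 - (i : ℕ) = (j - (i : ℕ)) + 1 := by omega
      rw [hv1, pow_succ]
      ring
    · rw [if_neg (show ¬(1 ≤ (i : ℕ) ∧ (i : ℕ) < j + 1) by omega), if_neg h2]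
      ring

lemma omega_inj : Function.Injective (omegaMap (F := F) (m := m)) := by
  intro p p' h
  have h0 : p 0 = p' 0 := by
    have := congrFun h 0
    rwa [omega_zero, omega_zero] at this
  funext j
  rcases j with ⟨k, hk⟩
  induction k using Nat.strong_induction_on with
  | _ k ih =>
    have hj := congrFun h ⟨k, hk⟩
    unfold omegaMap at hj
    have hs : ∀ i : Fin (m + 1),
        (if 1 ≤ (i : ℕ) ∧ (i : ℕ) < k then p i * p 0 ^ (k - (i : ℕ)) else 0)
        = (if 1 ≤ (i : ℕ) ∧ (i : ℕ) < k then p' i * p' 0 ^ (k - (i : ℕ)) else 0) := by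
      intro i
      by_cases hc : 1 ≤ (i : ℕ) ∧ (i : ℕ) < k
      · rw [if_pos hc, if_pos hc, h0]
        have : p i = p' i := by
          have := ih (i : ℕ) hc.2 (by omega)
          simpa [Fin.ext_iff] using this
        rw [this]
      · rw [if_neg hc, if_neg hc]
    rw [Finset.sum_congr rfl (fun i _ => hs i)] at hj
    exact add_right_cancel hj

lemma adj_iff (p l : Fin (m + 1) → F) :
    wengerAdj p l ↔ wengerAdj' (omegaMap p) l := by
  constructor
  · intro h
    have aux : ∀ k (hk : k + 1 < m + 1),
        l ⟨k + 1, hk⟩ + omegaMap p ⟨k + 1, hk⟩ = l 0 * p 0 ^ (k + 1) := by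
      intro k
      induction k with
      | zero =>
        intro hk
        have := h ⟨0, by omega⟩
        rw [omega_one p hk]
        simpa [Fin.succ, Fin.castSucc, Fin.castAdd, Fin.castLE] using this
      | succ n ih =>
        intro hk
        have hrec := omega_rec p (n + 1) (by omega) hk
        have hh := h ⟨n + 1, by omega⟩
        have hh' : l ⟨n + 2, hk⟩ + p ⟨n + 2, hk⟩ = l ⟨n + 1, by omega⟩ * p 0 := by
          simpa [Fin.succ, Fin.castSucc, Fin.castAdd, Fin.castLE] using hh
        have ihn := ih (by omega)
        rw [hrec]
        calc l ⟨n + 2, hk⟩ + (p ⟨n + 2, hk⟩ + omegaMap p ⟨n + 1, by omega⟩ * p 0)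
            = (l ⟨n + 2, hk⟩ + p ⟨n + 2, hk⟩) + omegaMap p ⟨n + 1, by omega⟩ * p 0 := by ring
          _ = (l ⟨n + 1, by omega⟩ + omegaMap p ⟨n + 1, by omega⟩) * p 0 := by rw [hh']; ring
          _ = l 0 * p 0 ^ (n + 1) * p 0 := by rw [ihn]
          _ = l 0 * p 0 ^ (n + 1 + 1) := by ring
    intro i
    have := aux (i : ℕ) (by omega)
    simpa [Fin.succ, omega_zero] using this
  · intro h i
    rcases i with ⟨k, hk⟩
    have hK : ∀ j (hj : j + 1 < m + 1),
        l ⟨j + 1, hj⟩ + omegaMap p ⟨j + 1, hj⟩ = l 0 * p 0 ^ (j + 1) := by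
      intro j hj
      have := h ⟨j, by omega⟩
      simpa [Fin.succ, omega_zero] using this
    match k, hk with
    | 0, hk =>
      have := hK 0 (by omega)
      rw [omega_one p (by omega)] at this
      simpa [Fin.succ, Fin.castSucc, Fin.castAdd, Fin.castLE] using this
    | (n+1), hk =>
      have h1 := hK (n + 1) (by omega)
      have h2 := hK n (by omega)
      have hrec := omega_rec p (n + 1) (by omega) (by omega)
      rw [hrec] at h1
      show l ⟨n + 2, by omega⟩ + p ⟨n + 2, by omega⟩ = l ⟨n + 1, by omega⟩ * p 0
      linear_combination h1 - p 0 * h2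

/-- The map `ω`, acting by `omegaMap` on points and by the identity on
lines, is an isomorphism from `W_m(q)` to `W'_m(q)`. -/
theorem wenger_iso_wenger' (q m : ℕ) (hm : 1 ≤ m) (F : Type) [Field F] [Fintype F]
    (hq : Fintype.card F = q) :
    ∃ e : WengerGraph F m ≃g WengerGraph' F m,
      (∀ p : Fin (m + 1) → F, e (Sum.inl p) = Sum.inl (omegaMap p)) ∧
      (∀ l : Fin (m + 1) → F, e (Sum.inr l) = Sum.inr l) := by
  have hbij : Function.Bijective (omegaMap (F := F) (m := m)) :=
    Finite.injective_iff_bijective.mp omega_inj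
  refine ⟨⟨Equiv.sumCongr (Equiv.ofBijective _ hbij) (Equiv.refl _), ?_⟩,
    fun p => rfl, fun l => rfl⟩
  rintro (p | l) (p' | l') <;>
    simp [WengerGraph, WengerGraph', Equiv.sumCongr, Equiv.ofBijective, adj_iff]
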